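/- Suppose s is a complex number such that the series Σ_𝔵 (1/l(𝔵)) e^{−s·w_t(𝔵)}, taken over all nonempty finite words 𝔵 over the alphabet {1,...,N}, converges absolutely. Then exp(Σ_𝔵 (1/l(𝔵)) e^{−s·w_t(𝔵)}) = Π_𝔭 (1 − e^{−s·w_t(𝔭)})^{−1}, where the product runs over all periodic orbits 𝔭 of the shift σ and converges (multipliably). -/

import Mathlib

namespace SuspendedFlow

/-- The space of sequences over the alphabet `{1,...,N}`. -/
abbrev Sequences (N : ℕ) := ℕ → Fin N

/-- The left shift on sequences. -/
def shift {N : ℕ} (a : Sequences N) : Sequences N := fun n => a (n + 1)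

/-- Nonempty finite words over the alphabet `{1,...,N}`: a word of length `l + 1`. -/
abbrev Word (N : ℕ) := Σ l : ℕ, Fin (l + 1) → Fin N

/-- The length of a word. -/
def wordLen {N : ℕ} (x : Word N) : ℕ := x.1 + 1

/-- The periodic sequence obtained by repeating a finite word. -/
def periodize {N : ℕ} (x : Word N) : Sequences N :=
  fun n => x.2 ⟨n % (x.1 + 1), Nat.mod_lt n (Nat.succ_pos x.1)⟩

/-- Total weight of a finite word: `w(a) + w(σa) + ⋯ + w(σ^{l-1}a)`, where `a` is the
periodic sequence obtained by repeating the word. -/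
noncomputable def totalWeight {N : ℕ} (w : Sequences N → ℝ) (x : Word N) : ℝ :=
  ∑ i : Fin (x.1 + 1), w (shift^[(i : ℕ)] (periodize x))

/-- A finite set of sequences is a periodic orbit of the shift if it is the orbit of a
periodic sequence. -/
def IsPeriodicOrbit {N : ℕ} (p : Finset (Sequences N)) : Prop :=
  ∃ a : Sequences N, (∃ l : ℕ, 1 ≤ l ∧ shift^[l] a = a) ∧
    (p : Set (Sequences N)) = {b | ∃ k : ℕ, b = shift^[k] a}

/-- Total weight of a periodic orbit. -/
noncomputable def orbitWeight {N : ℕ} (w : Sequences N → ℝ) (p : Finset (Sequences N)) : ℝ :=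
  ∑ b ∈ p, w b

open Function Finset

variable {N : ℕ}

lemma shift_iterate_apply (a : Sequences N) (k n : ℕ) : (shift^[k] a) n = a (n + k) := by
  induction k generalizing a with
  | zero => rfl
  | succ k ih => rw [Function.iterate_succ_apply, ih]; rfl

lemma periodize_isPeriodicPt (x : Word N) :
    Function.IsPeriodicPt shift (x.1 + 1) (periodize x) := by
  show shift^[x.1 + 1] (periodize x) = periodize x
  funext n
  rw [shift_iterate_apply]
  exact congrArg x.2 (Fin.ext (Nat.add_mod_right n (x.1 + 1)))

lemma periodize_mem_periodicPts (x : Word N) : periodize x ∈ periodicPts shift :=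
  mk_mem_periodicPts x.1.succ_pos (periodize_isPeriodicPt x)

lemma periodic_apply_mod {a : Sequences N} {L : ℕ} (h : Function.IsPeriodicPt shift L a)
    (n : ℕ) : a n = a (n % L) := by
  conv_lhs => rw [← Nat.mod_add_div n L]
  rw [← shift_iterate_apply a (L * (n / L)) (n % L), (h.mul_const (n / L)).eq]

noncomputable def orbitF (a : Sequences N) : Finset (Sequences N) :=
  letI := Classical.decEq (Sequences N)
  (Finset.range (minimalPeriod shift a)).image (fun k => shift^[k] a)

lemma orbitF_coe {a : Sequences N} (ha : a ∈ periodicPts shift) :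
    (orbitF a : Set (Sequences N)) = {b | ∃ k : ℕ, b = shift^[k] a} := by
  ext b
  simp only [orbitF, coe_image, coe_range, Set.mem_image, Set.mem_Iio, Set.mem_setOf_eq]
  constructor
  · rintro ⟨k, -, rfl⟩; exact ⟨k, rfl⟩
  · rintro ⟨k, rfl⟩
    exact ⟨k % minimalPeriod shift a, Nat.mod_lt _ (minimalPeriod_pos_of_mem_periodicPts ha),
      iterate_mod_minimalPeriod_eq⟩

lemma mem_orbitF_self {a : Sequences N} (ha : a ∈ periodicPts shift) : a ∈ orbitF a := by
  rw [← Finset.mem_coe, orbitF_coe ha]; exact ⟨0, rfl⟩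

lemma orbitF_isPeriodicOrbit {a : Sequences N} (ha : a ∈ periodicPts shift) :
    IsPeriodicOrbit (orbitF a) :=
  ⟨a, ⟨minimalPeriod shift a, minimalPeriod_pos_of_mem_periodicPts ha,
    iterate_minimalPeriod⟩, orbitF_coe ha⟩

lemma orbitF_iterate {a : Sequences N} (ha : a ∈ periodicPts shift) (k : ℕ) :
    orbitF (shift^[k] a) = orbitF a := by
  have hb : shift^[k] a ∈ periodicPts shift :=
    mk_mem_periodicPts (minimalPeriod_pos_of_mem_periodicPts ha)
      ((isPeriodicPt_minimalPeriod shift a).apply_iterate k)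
  apply Finset.coe_injective
  rw [orbitF_coe hb, orbitF_coe ha]
  ext c
  simp only [Set.mem_setOf_eq]
  constructor
  · rintro ⟨j, rfl⟩; exact ⟨j + k, (Function.iterate_add_apply _ _ _ _).symm⟩
  · rintro ⟨j, rfl⟩
    set m := minimalPeriod shift a with hm
    have hmpos : 0 < m := minimalPeriod_pos_of_mem_periodicPts ha
    refine ⟨j + (m - k % m), ?_⟩
    have hle : k % m ≤ m := (Nat.mod_lt _ hmpos).le
    calc shift^[j] a = shift^[j] (shift^[m] a) := by rw [iterate_minimalPeriod]
      _ = shift^[j + m] a := (Function.iterate_add_apply _ _ _ _).symm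
      _ = shift^[j + (m - k % m) + k % m] a := by
          congr 1; omega
      _ = shift^[j + (m - k % m)] (shift^[k % m] a) := Function.iterate_add_apply _ _ _ _
      _ = shift^[j + (m - k % m)] (shift^[k] a) := by rw [iterate_mod_minimalPeriod_eq]

lemma sum_orbitF {a : Sequences N} (ha : a ∈ periodicPts shift) (w : Sequences N → ℝ) :
    orbitWeight w (orbitF a) =
      ∑ i ∈ Finset.range (minimalPeriod shift a), w (shift^[i] a) := by
  classical
  unfold orbitWeight orbitF
  apply Finset.sum_image
  intro i hi j hj hij
  exact iterate_injOn_Iio_minimalPeriod (Finset.mem_range.mp hi) (Finset.mem_range.mp hj) hij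

lemma card_orbitF (a : Sequences N) : (orbitF a).card = minimalPeriod shift a := by
  classical
  unfold orbitF
  rw [Finset.card_image_of_injOn, Finset.card_range]
  intro i hi j hj hij
  exact iterate_injOn_Iio_minimalPeriod (Finset.mem_range.mp hi) (Finset.mem_range.mp hj) hij

lemma eq_orbitF {p : Finset (Sequences N)} (hp : IsPeriodicOrbit p) :
    ∃ a ∈ periodicPts shift, p = orbitF a := by
  obtain ⟨a, ⟨l, hl, hla⟩, hset⟩ := hp
  have ha : a ∈ periodicPts shift := mk_mem_periodicPts hl hla
  exact ⟨a, ha, Finset.coe_injective (hset.trans (orbitF_coe ha).symm)⟩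

lemma mem_orbit_props {p : Finset (Sequences N)} (hp : IsPeriodicOrbit p) {b : Sequences N}
    (hb : b ∈ p) :
    b ∈ periodicPts shift ∧ orbitF b = p ∧ minimalPeriod shift b = p.card := by
  obtain ⟨a, ha, rfl⟩ := eq_orbitF hp
  rw [← Finset.mem_coe, orbitF_coe ha] at hb
  obtain ⟨k, rfl⟩ := hb
  refine ⟨mk_mem_periodicPts (minimalPeriod_pos_of_mem_periodicPts ha)
      ((isPeriodicPt_minimalPeriod shift a).apply_iterate k), orbitF_iterate ha k, ?_⟩
  rw [minimalPeriod_apply_iterate ha k, card_orbitF]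


lemma periodize_apply_of_lt (x : Word N) {n : ℕ} (h : n < x.1 + 1) :
    periodize x n = x.2 ⟨n, h⟩ :=
  congrArg x.2 (Fin.ext (Nat.mod_eq_of_lt h))

lemma word_ext {x y : Word N} (h1 : x.1 = y.1)
    (h2 : ∀ n, periodize x n = periodize y n) : x = y := by
  obtain ⟨l, f⟩ := x; obtain ⟨l', g⟩ := y
  dsimp at h1; subst h1
  have hfg : f = g := by
    funext i
    have h := h2 i
    rw [periodize_apply_of_lt ⟨l, f⟩ i.isLt, periodize_apply_of_lt ⟨l, g⟩ i.isLt] at h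
    simpa using h
  rw [hfg]

noncomputable def wordOf (b : Sequences N) (k : ℕ) : Word N :=
  ⟨minimalPeriod shift b * (k + 1) - 1, fun i => b i⟩

lemma wordOf_fst {b : Sequences N} (hb : b ∈ periodicPts shift) (k : ℕ) :
    (wordOf b k).1 + 1 = minimalPeriod shift b * (k + 1) :=
  Nat.succ_pred_eq_of_pos (Nat.mul_pos (minimalPeriod_pos_of_mem_periodicPts hb) k.succ_pos)

lemma periodize_wordOf {b : Sequences N} (hb : b ∈ periodicPts shift) (k : ℕ) :
    periodize (wordOf b k) = b := by
  funext n
  have hL : (wordOf b k).1 + 1 = minimalPeriod shift b * (k + 1) := wordOf_fst hb k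
  show (wordOf b k).2 ⟨n % ((wordOf b k).1 + 1), _⟩ = b n
  show b (n % ((wordOf b k).1 + 1)) = b n
  rw [hL, ← periodic_apply_mod ((isPeriodicPt_minimalPeriod shift b).mul_const (k + 1)) n]

abbrev PO (N : ℕ) := {p : Finset (Sequences N) // IsPeriodicOrbit p}

abbrev Idx (N : ℕ) := Σ p : PO N, ({b : Sequences N // b ∈ p.1} × ℕ)

lemma idx_ext {i j : Idx N} (hp : i.1.1 = j.1.1) (hb : i.2.1.1 = j.2.1.1)
    (hk : i.2.2 = j.2.2) : i = j := by
  obtain ⟨⟨p, hP⟩, ⟨b, hb1⟩, k⟩ := i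
  obtain ⟨⟨q, hQ⟩, ⟨c, hc1⟩, k'⟩ := j
  dsimp at hp hb hk
  subst hp; subst hb; subst hk
  rfl

noncomputable def wordEquiv (N : ℕ) : Idx N ≃ Word N where
  toFun i := wordOf i.2.1.1 i.2.2
  invFun x := ⟨⟨orbitF (periodize x), orbitF_isPeriodicOrbit (periodize_mem_periodicPts x)⟩,
    ⟨⟨periodize x, mem_orbitF_self (periodize_mem_periodicPts x)⟩,
     (x.1 + 1) / minimalPeriod shift (periodize x) - 1⟩⟩
  left_inv := by
    rintro ⟨p, b, k⟩
    obtain ⟨hper, horb, hmp⟩ := mem_orbit_props p.2 b.2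
    have hm : 0 < minimalPeriod shift b.1 := minimalPeriod_pos_of_mem_periodicPts hper
    have hpz : periodize (wordOf b.1 k) = b.1 := periodize_wordOf hper k
    refine idx_ext ?_ ?_ ?_
    · show orbitF (periodize (wordOf b.1 k)) = p.1
      rw [hpz, horb]
    · exact hpz
    · show ((wordOf b.1 k).1 + 1) / minimalPeriod shift (periodize (wordOf b.1 k)) - 1 = k
      rw [hpz, wordOf_fst hper, Nat.mul_div_cancel_left _ hm]
      simp
  right_inv := by
    intro x
    set a := periodize x with ha
    have hper : a ∈ periodicPts shift := periodize_mem_periodicPts x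
    have hm : 0 < minimalPeriod shift a := minimalPeriod_pos_of_mem_periodicPts hper
    have hdvd : minimalPeriod shift a ∣ x.1 + 1 :=
      (periodize_isPeriodicPt x).minimalPeriod_dvd
    have hq : 0 < (x.1 + 1) / minimalPeriod shift a :=
      Nat.div_pos (Nat.le_of_dvd x.1.succ_pos hdvd) hm
    refine word_ext ?_ ?_
    · show minimalPeriod shift a * ((x.1 + 1) / minimalPeriod shift a - 1 + 1) - 1 = x.1
      have h1 : (x.1 + 1) / minimalPeriod shift a - 1 + 1
          = (x.1 + 1) / minimalPeriod shift a := by omega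
      rw [h1, Nat.mul_div_cancel' hdvd]
      omega
    · intro n
      rw [periodize_wordOf hper]

lemma sum_range_mul {b : Sequences N} {m : ℕ} (hb : Function.IsPeriodicPt shift m b)
    (w : Sequences N → ℝ) (c : ℕ) :
    ∑ i ∈ Finset.range (m * c), w (shift^[i] b)
      = (c : ℝ) * ∑ i ∈ Finset.range m, w (shift^[i] b) := by
  induction c with
  | zero => simp
  | succ c ih =>
    rw [Nat.mul_succ, Finset.sum_range_add, ih]
    have hco : ∀ i, w (shift^[m * c + i] b) = w (shift^[i] b) := by
      intro i
      rw [add_comm, Function.iterate_add_apply, (hb.mul_const c).eq]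
    simp_rw [hco]
    push_cast; ring

lemma totalWeight_wordOf {b : Sequences N} (hb : b ∈ periodicPts shift)
    (w : Sequences N → ℝ) (k : ℕ) :
    totalWeight w (wordOf b k)
      = ((k : ℝ) + 1) * ∑ i ∈ Finset.range (minimalPeriod shift b), w (shift^[i] b) := by
  unfold totalWeight
  rw [Fin.sum_univ_eq_sum_range (fun i => w (shift^[i] (periodize (wordOf b k)))),
    wordOf_fst hb k, periodize_wordOf hb k,
    sum_range_mul (isPeriodicPt_minimalPeriod shift b) w (k + 1)]
  push_cast; ring

lemma f_wordOf {p : Finset (Sequences N)} (hp : IsPeriodicOrbit p) {b : Sequences N}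
    (hb : b ∈ p) (w : Sequences N → ℝ) (s : ℂ) (k : ℕ) :
    (1 / (wordLen (wordOf b k) : ℂ)) * Complex.exp (-s * (totalWeight w (wordOf b k) : ℂ))
      = (1 / (p.card : ℂ)) *
        (Complex.exp (-s * (orbitWeight w p : ℂ)) ^ (k + 1) / ((k + 1 : ℕ) : ℂ)) := by
  obtain ⟨hper, horb, hmp⟩ := mem_orbit_props hp hb
  have hm : 0 < p.card := hmp ▸ minimalPeriod_pos_of_mem_periodicPts hper
  have h1 : (wordLen (wordOf b k) : ℂ) = (p.card : ℂ) * ((k : ℂ) + 1) := by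
    unfold wordLen
    rw [wordOf_fst hper k, hmp]
    push_cast; ring
  have h2 : ((totalWeight w (wordOf b k) : ℝ) : ℂ) = ((k : ℂ) + 1) * (orbitWeight w p : ℂ) := by
    rw [totalWeight_wordOf hper w k]
    have h3 : ∑ i ∈ Finset.range (minimalPeriod shift b), w (shift^[i] b)
        = orbitWeight w p := by rw [← sum_orbitF hper w, horb]
    rw [h3]; push_cast; ring
  rw [h1, h2]
  have h4 : Complex.exp (-s * (((k : ℂ) + 1) * (orbitWeight w p : ℂ)))
      = Complex.exp (-s * (orbitWeight w p : ℂ)) ^ (k + 1) := by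
    rw [← Complex.exp_nat_mul]
    congr 1; push_cast; ring
  rw [h4]
  have hc : ((p.card : ℂ)) ≠ 0 := Nat.cast_ne_zero.mpr hm.ne'
  have hk : ((k : ℂ) + 1) ≠ 0 := by
    have := Nat.cast_ne_zero (R := ℂ).mpr k.succ_ne_zero
    push_cast at this
    exact this
  push_cast
  field_simp

set_option maxHeartbeats 2000000 in
/-- Euler product: `ζ_w(s) = exp(∑_x (1/l(x)) e^{-s w_t(x)}) = ∏_p (1 - e^{-s w_t(p)})⁻¹`,
the product over all periodic orbits of the shift being multipliable. -/
theorem euler_product (N : ℕ) (hN : 1 ≤ N) (w : Sequences N → ℝ) (hw : ∀ a, 0 < w a) (s : ℂ)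
    (habs : Summable fun x : Word N =>
      ‖(1 / (wordLen x : ℂ)) * Complex.exp (-s * (totalWeight w x : ℂ))‖) :
    Multipliable (fun p : {p : Finset (Sequences N) // IsPeriodicOrbit p} =>
        (1 - Complex.exp (-s * (orbitWeight w p.1 : ℂ)))⁻¹) ∧
      Complex.exp (∑' x : Word N, (1 / (wordLen x : ℂ)) * Complex.exp (-s * (totalWeight w x : ℂ)))
        = ∏' p : {p : Finset (Sequences N) // IsPeriodicOrbit p},
            (1 - Complex.exp (-s * (orbitWeight w p.1 : ℂ)))⁻¹ := by
  classical
  set f : Word N → ℂ := fun x =>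
    (1 / (wordLen x : ℂ)) * Complex.exp (-s * (totalWeight w x : ℂ)) with hfdef
  set z : PO N → ℂ := fun p => Complex.exp (-s * (orbitWeight w p.1 : ℂ)) with hzdef
  have hsf : Summable f := habs.of_norm
  set e : Idx N ≃ Word N := wordEquiv N with hedef
  have hg : Summable fun i : Idx N => f (e i) := e.summable_iff.mpr hsf
  have hgn : Summable fun i : Idx N => ‖f (e i)‖ := e.summable_iff.mpr habs
  have hcard : ∀ p : PO N, 0 < p.1.card := by
    intro p
    obtain ⟨a, ha, hpa⟩ := eq_orbitF p.2
    rw [hpa]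
    exact Finset.card_pos.mpr ⟨a, mem_orbitF_self ha⟩
  have hval : ∀ (p : PO N) (b : {b // b ∈ p.1}) (k : ℕ),
      f (e ⟨p, ⟨b, k⟩⟩) = (1 / (p.1.card : ℂ)) * (z p ^ (k + 1) / ((k + 1 : ℕ) : ℂ)) := by
    intro p b k
    have he : e ⟨p, ⟨b, k⟩⟩ = wordOf b.1 k := rfl
    rw [he, hfdef, hzdef]
    exact f_wordOf p.2 b.2 w s k
  have hz1 : ∀ p : PO N, ‖z p‖ < 1 := by
    intro p
    by_contra hcon
    push_neg at hcon
    obtain ⟨b, hb⟩ := Finset.card_pos.mp (hcard p)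
    have hsum : Summable fun k : ℕ => ‖f (e ⟨p, ⟨⟨b, hb⟩, k⟩⟩)‖ :=
      Summable.prod_factor (hgn.sigma_factor p) ⟨b, hb⟩
    have hge : ∀ k : ℕ, 1 / ((p.1.card : ℝ) * ((k : ℝ) + 1)) ≤ ‖f (e ⟨p, ⟨⟨b, hb⟩, k⟩⟩)‖ := by
      intro k
      rw [hval p ⟨b, hb⟩ k]
      have h1 : ‖(1 / ((p.1.card : ℕ) : ℂ)) * (z p ^ (k + 1) / (((k + 1 : ℕ)) : ℂ))‖
          = (1 / (p.1.card : ℝ)) * (‖z p‖ ^ (k + 1) / (((k + 1 : ℕ)) : ℝ)) := by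
        rw [norm_mul, norm_div, norm_div, norm_one, norm_pow, RCLike.norm_natCast,
          RCLike.norm_natCast]
      rw [h1]
      have h2 : (1 : ℝ) ≤ ‖z p‖ ^ (k + 1) := one_le_pow₀ hcon
      have hm : (0 : ℝ) < (p.1.card : ℝ) := by exact_mod_cast hcard p
      have hk : (0 : ℝ) < ((k + 1 : ℕ) : ℝ) := by positivity
      calc 1 / ((p.1.card : ℝ) * ((k : ℝ) + 1))
          = (1 / (p.1.card : ℝ)) * (1 / (((k + 1 : ℕ)) : ℝ)) := by
            push_cast
            rw [one_div_mul_one_div]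
        _ ≤ (1 / (p.1.card : ℝ)) * (‖z p‖ ^ (k + 1) / (((k + 1 : ℕ)) : ℝ)) := by
            gcongr
    have hs2 : Summable fun k : ℕ => 1 / ((p.1.card : ℝ) * ((k : ℝ) + 1)) :=
      Summable.of_nonneg_of_le (fun k => by positivity) hge hsum
    have hm0 : ((p.1.card : ℝ)) ≠ 0 := by
      have := hcard p; positivity
    have hs3 : Summable fun k : ℕ => 1 / ((k : ℝ) + 1) := by
      have := hs2.mul_left ((p.1.card : ℝ))
      apply this.congr
      intro k
      field_simp
    have hs4 : Summable fun n : ℕ => 1 / (n : ℝ) := by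
      rw [← summable_nat_add_iff 1]
      apply hs3.congr
      intro k
      push_cast
      ring
    exact Real.not_summable_one_div_natCast hs4
  have hne : ∀ p : PO N, 1 - z p ≠ 0 := by
    intro p h
    rw [sub_eq_zero] at h
    have h2 := hz1 p
    rw [← h] at h2
    simp at h2
  -- the key HasSum over k for a fixed point of the orbit
  have hkey : ∀ (p : PO N) (b : {b // b ∈ p.1}),
      HasSum (fun k : ℕ => f (e ⟨p, ⟨b, k⟩⟩))
        ((1 / (p.1.card : ℂ)) * -Complex.log (1 - z p)) := by
    intro p b
    have ht : HasSum (fun n : ℕ => z p ^ n / (n : ℂ)) (-Complex.log (1 - z p)) :=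
      Complex.hasSum_taylorSeries_neg_log (hz1 p)
    have ht1 : HasSum (fun n : ℕ => z p ^ (n + 1) / ((n + 1 : ℕ) : ℂ))
        (-Complex.log (1 - z p)) :=
      (hasSum_nat_add_iff (f := fun n : ℕ => z p ^ n / (n : ℂ)) 1).mpr (by simpa using ht)
    have heq : (fun k : ℕ => f (e ⟨p, ⟨b, k⟩⟩))
        = fun k : ℕ => (1 / (p.1.card : ℂ)) * (z p ^ (k + 1) / ((k + 1 : ℕ) : ℂ)) :=
      funext (hval p b)
    rw [heq]
    exact ht1.mul_left _
  have hsum_p : ∀ p : PO N,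
      ∑' c : {b // b ∈ p.1} × ℕ, f (e ⟨p, c⟩) = -Complex.log (1 - z p) := by
    intro p
    have hsp : Summable fun c : {b // b ∈ p.1} × ℕ => f (e ⟨p, c⟩) := hg.sigma_factor p
    rw [hsp.tsum_prod]
    rw [tsum_congr (fun b => (hkey p b).tsum_eq)]
    rw [tsum_fintype, Finset.sum_const, Finset.card_univ, Fintype.card_coe, nsmul_eq_mul]
    have hc : ((p.1.card : ℂ)) ≠ 0 := Nat.cast_ne_zero.mpr (hcard p).ne'
    field_simp
  have htotal : ∑' x : Word N, f x = ∑' p : PO N, -Complex.log (1 - z p) := by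
    rw [← e.tsum_eq f, hg.tsum_sigma]
    exact tsum_congr hsum_p
  have hsl : Summable fun p : PO N => -Complex.log (1 - z p) :=
    hg.sigma.congr hsum_p
  have hlog : ∀ p : PO N, Complex.log ((1 - z p)⁻¹) = -Complex.log (1 - z p) := by
    intro p
    apply Complex.log_inv
    intro harg
    rw [Complex.arg_eq_pi_iff] at harg
    have h1 : (z p).re ≤ ‖z p‖ := by
      exact Complex.re_le_norm _
    have h2 := hz1 p
    have h3 : (0 : ℝ) < (1 - z p).re := by
      rw [Complex.sub_re, Complex.one_re]
      linarith
    linarith [harg.1]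
  set F : PO N → Unit → ℂ := fun p _ => (1 - z p)⁻¹ with hFdef
  have hfn : ∀ (x : Unit) (n : PO N), F n x ≠ 0 := fun _ p => inv_ne_zero (hne p)
  have hslog : ∀ (x : Unit), Summable fun p : PO N => Complex.log (F p x) := by
    intro _
    exact hsl.congr fun p => (hlog p).symm
  have hmult : Multipliable fun p : PO N => F p () :=
    Complex.multipliable_of_summable_log (hslog ())
  refine ⟨hmult, ?_⟩
  show Complex.exp (∑' x : Word N, f x) = ∏' p : PO N, (1 - z p)⁻¹
  calc Complex.exp (∑' x : Word N, f x)
      = Complex.exp (∑' p : PO N, Complex.log ((1 - z p)⁻¹)) := by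
        rw [htotal, tsum_congr hlog]
    _ = ∏' p : PO N, (1 - z p)⁻¹ := by
        have hp := Complex.cexp_tsum_eq_tprod (hfn ()) (hslog ())
        simpa [hFdef, Function.comp] using hp

end SuspendedFlow
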